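/- Let m ≥ 1 be a natural number and let {αᵢ}_{i≥1} and {βᵢ}_{i≥0} be real sequences with αᵢ > 0 for all i, 4 ≥ α₁ > 1 > α₂ ≥ α₃ ≥ ⋯, 1 = β₀ ≥ β₁ ≥ β₂ ≥ ⋯ ≥ 0, lim_{i→∞} αᵢ = lim_{i→∞} βᵢ = 0, and ∑_{i=1}^{∞} (β_{i−1} − βᵢ)/√αᵢ ≤ 1. Let à be a finite set with |Ã| ≤ m, let Δ > 0 and L > 0, and let N, T_S, ω : à → ℝ with N(a) > 0, T_S(a) ≥ 0 and ω(a) ≥ 0 for all a ∈ Ã. For i ≥ 1 and a ∈ à define W_{i,a} := 16·αᵢ·(m²/Δ²)·L − T_S(a)·(max(1 − m·√αᵢ·ω(a)/Δ, 0))². If Δ ≤ ∑_{a∈Ã} min{ 2·√(2L/N(a)), 2·√(2L/(N(a) + T_S(a))) + T_S(a)·ω(a)/(N(a) + T_S(a)) }, then there exists i ≥ 1 such that for every j with 1 ≤ j < i fewer than βⱼ·m elements a ∈ à satisfy N(a) ≤ W_{j,a}, and at least βᵢ·m elements a ∈ à satisfy N(a) ≤ W_{i,a}. -/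

import Mathlib

open scoped Classical

lemma covering_per_elem (m : ℕ) (hm : 1 ≤ m) (Δ L αi Na TSa ωa : ℝ)
    (hΔ : 0 < Δ) (hL : 0 < L) (hα : 0 < αi) (hN : 0 < Na) (hTS : 0 ≤ TSa) (hω : 0 ≤ ωa)
    (hWlt : 16 * αi * ((m : ℝ) ^ 2 / Δ ^ 2) * L
        - TSa * (max (1 - (m : ℝ) * Real.sqrt αi * ωa / Δ) 0) ^ 2 < Na) :
    min (2 * Real.sqrt (2 * L / Na))
      (2 * Real.sqrt (2 * L / (Na + TSa)) + TSa * ωa / (Na + TSa))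
      ≤ Δ / ((m : ℝ) * Real.sqrt αi) := by
  have hmpos : (0:ℝ) < (m:ℝ) := by exact_mod_cast Nat.lt_of_lt_of_le Nat.zero_lt_one hm
  have hΔ2 : (0:ℝ) < Δ ^ 2 := by positivity
  have hs : 0 < Real.sqrt αi := Real.sqrt_pos.2 hα
  set s := Real.sqrt αi with hsdef
  have hs2 : s ^ 2 = αi := Real.sq_sqrt hα.le
  have hms : (0:ℝ) < (m:ℝ) * s := mul_pos hmpos hs
  set x := max (1 - (m : ℝ) * s * ωa / Δ) 0 with hxdef
  have hx0 : 0 ≤ x := le_max_right _ _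
  have hx1 : x ≤ 1 := by
    rw [hxdef]
    apply max_le _ zero_le_one
    have : 0 ≤ (m:ℝ) * s * ωa / Δ := by positivity
    linarith
  have hden : (0:ℝ) < 4 * ((m:ℝ)^2 * αi) :=
    mul_pos (by norm_num) (mul_pos (pow_pos hmpos 2) hα)
  rcases le_or_gt (8 * αi * ((m : ℝ) ^ 2 / Δ ^ 2) * L) Na with hcase | hcase
  · refine le_trans (min_le_left _ _) ?_
    have key1 : 8 * αi * ((m:ℝ)^2 / Δ^2) * L * Δ^2 = 8 * αi * (m:ℝ)^2 * L := by
      field_simp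
    have hcase' : 8 * αi * (m:ℝ)^2 * L ≤ Na * Δ^2 := by
      have := mul_le_mul_of_nonneg_right hcase hΔ2.le
      rw [key1] at this
      linarith
    have hsq1 : (Δ/((m:ℝ)*s)/2)^2 = Δ^2/(4*((m:ℝ)^2*αi)) := by
      rw [div_pow, div_pow, mul_pow, hs2]; ring
    have h1 : 2 * L / Na ≤ (Δ/((m:ℝ)*s)/2)^2 := by
      rw [hsq1, div_le_div_iff₀ hN hden]
      linarith [hcase']
    have h1' := Real.sqrt_le_sqrt h1
    rw [Real.sqrt_sq (by positivity)] at h1'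
    linarith
  · refine le_trans (min_le_right _ _) ?_
    have hC : 0 < 8 * αi * ((m:ℝ)^2 / Δ^2) * L :=
      mul_pos (mul_pos (mul_pos (by norm_num) hα) (div_pos (pow_pos hmpos 2) hΔ2)) hL
    have hTSx : 8 * αi * ((m : ℝ) ^ 2 / Δ ^ 2) * L < TSa * x ^ 2 := by linarith
    have hxpos : 0 < x := by
      rcases hx0.lt_or_eq with h | h
      · exact h
      · exfalso; rw [← h] at hTSx; simp at hTSx; linarith
    have hTSpos : 0 < TSa := by nlinarith [sq_nonneg x]
    have hS : 0 < Na + TSa := by linarith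
    have hxeq : x = 1 - (m:ℝ) * s * ωa / Δ := by
      rcases max_cases (1 - (m:ℝ) * s * ωa / Δ) 0 with ⟨h1, h2⟩ | ⟨h1, h2⟩
      · rw [hxdef, h1]
      · exfalso; rw [hxdef] at hxpos; rw [h1] at hxpos; exact lt_irrefl _ hxpos
    have h' : (m:ℝ) * s * ωa / Δ = 1 - x := by linarith [hxeq]
    rw [div_eq_iff hΔ.ne'] at h'
    have hSx : 8 * αi * ((m:ℝ)^2/Δ^2) * L < (Na + TSa) * x^2 := by
      nlinarith [mul_nonneg hN.le (sq_nonneg x)]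
    have key2 : 8 * αi * ((m:ℝ)^2 / Δ^2) * L * Δ^2 = 8 * αi * (m:ℝ)^2 * L := by
      field_simp
    have hSx' : 8 * αi * (m:ℝ)^2 * L < (Na + TSa) * x^2 * Δ^2 := by
      have := mul_lt_mul_of_pos_right hSx hΔ2
      rw [key2] at this
      linarith
    have hsq2 : (x*Δ/((m:ℝ)*s)/2)^2 = x^2*Δ^2/(4*((m:ℝ)^2*αi)) := by
      rw [div_pow, div_pow, mul_pow x Δ, mul_pow, hs2]; ring
    have h1 : 2 * L / (Na + TSa) ≤ (x*Δ/((m:ℝ)*s)/2)^2 := by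
      rw [hsq2, div_le_div_iff₀ hS hden]
      linarith [hSx']
    have h1' := Real.sqrt_le_sqrt h1
    rw [Real.sqrt_sq (by positivity)] at h1'
    have h2 : TSa * ωa / (Na + TSa) ≤ ωa := by
      rw [div_le_iff₀ hS]
      linarith [mul_nonneg hω hN.le, mul_le_mul_of_nonneg_left (le_add_of_nonneg_left hN.le : TSa ≤ Na + TSa) hω]
    have hfin : x*Δ/((m:ℝ)*s) + ωa = Δ/((m:ℝ)*s) := by
      field_simp
      linarith [h']
    linarith

/-- Covering lemma in the instance-dependent regret analysis of MIN-COMB-UCB. -/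
theorem covering_lemma
    {σ : Type*} (m : ℕ) (hm : 1 ≤ m)
    (α β : ℕ → ℝ)
    (hαpos : ∀ i, 1 ≤ i → 0 < α i)
    (hα1 : α 1 ≤ 4) (hα1' : 1 < α 1) (hα2 : α 2 < 1)
    (hαmono : ∀ i, 2 ≤ i → α (i + 1) ≤ α i)
    (hβ0 : β 0 = 1) (hβmono : ∀ i, β (i + 1) ≤ β i) (hβnonneg : ∀ i, 0 ≤ β i)
    (hαlim : Filter.Tendsto α Filter.atTop (nhds 0))
    (hβlim : Filter.Tendsto β Filter.atTop (nhds 0))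
    (hsummable : Summable (fun i : ℕ => (β i - β (i + 1)) / Real.sqrt (α (i + 1))))
    (hsum : (∑' i : ℕ, (β i - β (i + 1)) / Real.sqrt (α (i + 1))) ≤ 1)
    (Atil : Finset σ) (hAcard : Atil.card ≤ m)
    (Δ L : ℝ) (hΔ : 0 < Δ) (hL : 0 < L)
    (N TS ω : σ → ℝ)
    (hNpos : ∀ a ∈ Atil, 0 < N a)
    (hTSnonneg : ∀ a ∈ Atil, 0 ≤ TS a)
    (hωnonneg : ∀ a ∈ Atil, 0 ≤ ω a)
    (W : ℕ → σ → ℝ)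
    (hW : ∀ i a, W i a = 16 * α i * ((m : ℝ) ^ 2 / Δ ^ 2) * L
        - TS a * (max (1 - (m : ℝ) * Real.sqrt (α i) * ω a / Δ) 0) ^ 2)
    (hgap : Δ ≤ ∑ a ∈ Atil,
        min (2 * Real.sqrt (2 * L / N a))
          (2 * Real.sqrt (2 * L / (N a + TS a)) + TS a * ω a / (N a + TS a))) :
    ∃ i, 1 ≤ i ∧
      (∀ j, 1 ≤ j → j < i →
        ((Atil.filter (fun a => N a ≤ W j a)).card : ℝ) < β j * (m : ℝ)) ∧
      β i * (m : ℝ) ≤ ((Atil.filter (fun a => N a ≤ W i a)).card : ℝ) := by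
  have hmR : (0:ℝ) < (m:ℝ) := by exact_mod_cast Nat.lt_of_lt_of_le Nat.zero_lt_one hm
  have hΔ2 : (0:ℝ) < Δ ^ 2 := by positivity
  have hex : ∃ i, 1 ≤ i ∧
      β i * (m : ℝ) ≤ ((Atil.filter (fun a => N a ≤ W i a)).card : ℝ) := by
    by_contra hcon
    push_neg at hcon
    -- hcon : ∀ i, 1 ≤ i → card < β i * m
    set g : ℕ → ℝ := fun i => (Real.sqrt (α i))⁻¹ with hg
    have hαanti : ∀ i, 1 ≤ i → α (i+1) ≤ α i := by
      intro i hi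
      rcases eq_or_lt_of_le hi with h | h
      · rw [← h]; linarith
      · exact hαmono i h
    have hgstep : ∀ i, 1 ≤ i → g i ≤ g (i+1) := by
      intro i hi
      have h1 : 0 < Real.sqrt (α (i+1)) := Real.sqrt_pos.2 (hαpos _ (le_trans hi (Nat.le_succ i)))
      exact inv_anti₀ h1 (Real.sqrt_le_sqrt (hαanti i hi))
    have hgmono : ∀ i j, 1 ≤ i → i ≤ j → g i ≤ g j := by
      intro i j hi hij
      induction j, hij using Nat.le_induction with
      | base => exact le_rfl
      | succ n hn ih => exact le_trans ih (hgstep n (le_trans hi hn))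
    have hgpos : ∀ i, 1 ≤ i → 0 < g i := fun i hi => inv_pos.2 (Real.sqrt_pos.2 (hαpos i hi))
    -- each arm escapes eventually
    have hesc : ∀ a ∈ Atil, ∃ i, 1 ≤ i ∧ W i a < N a := by
      intro a ha
      have hNa := hNpos a ha
      have hε : (0:ℝ) < N a * Δ^2 / (16 * (m:ℝ)^2 * L) := by positivity
      obtain ⟨i, hi1, hi2⟩ := ((Filter.eventually_ge_atTop 1).and
        (hαlim.eventually_lt_const hε)).exists
      refine ⟨i, hi1, ?_⟩
      rw [hW]
      have hx2 : 0 ≤ TS a * (max (1 - (m:ℝ)*Real.sqrt (α i)*ω a/Δ) 0)^2 :=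
        mul_nonneg (hTSnonneg a ha) (sq_nonneg _)
      have h16 : (0:ℝ) < 16*(m:ℝ)^2*L := by positivity
      rw [lt_div_iff₀ h16] at hi2
      have e2 : 16 * α i * ((m:ℝ)^2/Δ^2) * L * Δ^2 = α i * (16*(m:ℝ)^2*L) := by
        field_simp
      have e3 : 16 * α i * ((m:ℝ)^2/Δ^2) * L * Δ^2 < N a * Δ^2 := by rw [e2]; exact hi2
      have e4 : 16 * α i * ((m:ℝ)^2/Δ^2) * L < N a := lt_of_mul_lt_mul_right e3 hΔ2.le
      linarith
    -- first escape time
    have hiafun : ∃ f : σ → ℕ, ∀ a ∈ Atil,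
        (1 ≤ f a ∧ W (f a) a < N a) ∧ ∀ j, 1 ≤ j → j < f a → N a ≤ W j a := by
      refine ⟨fun a => if h : ∃ i, 1 ≤ i ∧ W i a < N a then Nat.find h else 1, ?_⟩
      intro a ha
      simp only [dif_pos (hesc a ha)]
      refine ⟨Nat.find_spec (hesc a ha), ?_⟩
      intro j hj hlt
      by_contra hc
      push_neg at hc
      exact absurd ⟨hj, hc⟩ (Nat.find_min (hesc a ha) hlt)
    obtain ⟨ia, hia⟩ := hiafun
    set M := max (Atil.sup ia) 1 with hM
    have hM1 : 1 ≤ M := le_max_right _ _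
    have hiaM : ∀ a ∈ Atil, ia a ≤ M := fun a ha => le_trans (Finset.le_sup ha) (le_max_left _ _)
    set J := M + 1 with hJ
    -- telescoping per arm
    have htel : ∀ a ∈ Atil, g (ia a)
        = g 1 + ∑ i ∈ Finset.Ico 1 J, (if i < ia a then (g (i+1) - g i) else 0) := by
      intro a ha
      have h1 : ∑ i ∈ Finset.Ico 1 (ia a), (g (i+1) - g i) = g (ia a) - g 1 := by
        rw [Finset.sum_Ico_eq_sub _ (hia a ha).1.1]
        simp only [Finset.sum_range_sub g]
        ring
      have h2 : ∑ i ∈ Finset.Ico 1 J, (if i < ia a then (g (i+1) - g i) else 0)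
          = ∑ i ∈ Finset.Ico 1 (ia a), (g (i+1) - g i) := by
        rw [← Finset.sum_filter]
        congr 1
        ext i
        simp only [Finset.mem_filter, Finset.mem_Ico]
        have := hiaM a ha
        omega
      rw [h2, h1]; ring
    -- swap sums
    have hsum1 : ∑ a ∈ Atil, g (ia a)
        = (Atil.card : ℝ) * g 1
          + ∑ i ∈ Finset.Ico 1 J,
              ((Atil.filter (fun a => i < ia a)).card : ℝ) * (g (i+1) - g i) := by
      rw [Finset.sum_congr rfl htel, Finset.sum_add_distrib, Finset.sum_const, nsmul_eq_mul]
      congr 1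
      rw [Finset.sum_comm]
      refine Finset.sum_congr rfl ?_
      intro i _
      rw [← Finset.sum_filter, Finset.sum_const, nsmul_eq_mul]
    -- bounds on counts
    have hnle : ∀ i, 1 ≤ i →
        ((Atil.filter (fun a => i < ia a)).card : ℝ) < β i * (m:ℝ) := by
      intro i hi
      refine lt_of_le_of_lt ?_ (hcon i hi)
      have hsub : Atil.filter (fun a => i < ia a) ⊆ Atil.filter (fun a => N a ≤ W i a) := by
        intro a ha
        rw [Finset.mem_filter] at ha ⊢
        exact ⟨ha.1, (hia a ha.1).2 i hi ha.2⟩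
      exact_mod_cast Finset.card_le_card hsub
    -- Abel identity for β partial sums
    have habel : ∀ K, 1 ≤ K →
        ∑ i ∈ Finset.range K, (β i - β (i+1)) * g (i+1) + β K * g K
          = β 0 * g 1 + ∑ i ∈ Finset.Ico 1 K, β i * (g (i+1) - g i) := by
      intro K hK
      induction K, hK using Nat.le_induction with
      | base => simp [Finset.sum_range_one]; ring
      | succ n hn ih =>
        rw [Finset.sum_range_succ, Finset.sum_Ico_succ_top hn]
        linarith [ih]
    -- tail bound
    have hfnonneg : ∀ i : ℕ, (0:ℝ) ≤ (β i - β (i+1)) / Real.sqrt (α (i+1)) := fun i =>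
      div_nonneg (sub_nonneg.2 (hβmono i)) (Real.sqrt_nonneg _)
    have hfeq : ∀ i : ℕ, (β i - β (i+1)) / Real.sqrt (α (i+1)) = (β i - β (i+1)) * g (i+1) := by
      intro i; rw [hg]; exact div_eq_mul_inv _ _
    have htelsum : HasSum (fun i => β (i + J) - β (i + J + 1)) (β J) := by
      rw [hasSum_iff_tendsto_nat_of_nonneg (fun i => sub_nonneg.2 (hβmono _)) _]
      have hps : ∀ n, ∑ i ∈ Finset.range n, (β (i + J) - β (i + J + 1)) = β J - β (n + J) := by
        intro n
        have h := Finset.sum_range_sub' (fun i => β (i + J)) n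
        simp only [Nat.zero_add] at h
        rw [← h]
        refine Finset.sum_congr rfl ?_
        intro i _
        congr 2
        omega
      simp only [hps]
      have : Filter.Tendsto (fun n : ℕ => β (n + J)) Filter.atTop (nhds 0) :=
        hβlim.comp (Filter.tendsto_add_atTop_nat J)
      have h2 := Filter.Tendsto.sub (tendsto_const_nhds : Filter.Tendsto (fun _ : ℕ => β J)
        Filter.atTop (nhds (β J))) this
      simpa using h2
    have hshift : Summable (fun i => (β (i + J) - β (i + J + 1)) / Real.sqrt (α (i + J + 1))) :=
      (summable_nat_add_iff (f := fun i : ℕ => (β i - β (i+1)) / Real.sqrt (α (i+1))) J).2 hsummable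
    have htail : β J * g (J+1)
        ≤ ∑' i : ℕ, (β (i + J) - β (i + J + 1)) / Real.sqrt (α (i + J + 1)) := by
      have h1 : HasSum (fun i => (β (i + J) - β (i + J + 1)) * g (J+1)) (β J * g (J+1)) :=
        htelsum.mul_right _
      refine le_of_eq_of_le h1.tsum_eq.symm (Summable.tsum_le_tsum ?_ h1.summable hshift)
      intro i
      rw [hfeq (i + J)]
      exact mul_le_mul_of_nonneg_left (hgmono (J+1) (i+J+1) (by omega) (by omega))
        (sub_nonneg.2 (hβmono _))
    have hsplit := Summable.sum_add_tsum_nat_add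
      (f := fun i : ℕ => (β i - β (i+1)) / Real.sqrt (α (i+1))) J hsummable
    have hβbound : β 0 * g 1 + ∑ i ∈ Finset.Ico 1 J, β i * (g (i+1) - g i) ≤ 1 := by
      have e1 : ∑ i ∈ Finset.range J, (β i - β (i+1)) / Real.sqrt (α (i+1))
          = ∑ i ∈ Finset.range J, (β i - β (i+1)) * g (i+1) :=
        Finset.sum_congr rfl (fun i _ => hfeq i)
      have hJ1 : (1:ℕ) ≤ J := by omega
      have hβJgJ : β J * g J ≤ β J * g (J+1) :=
        mul_le_mul_of_nonneg_left (hgstep J hJ1) (hβnonneg J)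
      have habelJ := habel J hJ1
      rw [e1] at hsplit
      linarith [hsplit, htail, hsum, habelJ, hβJgJ]
    -- strict comparison of the double sum
    have hstrict : ∑ a ∈ Atil, g (ia a) < (m:ℝ) := by
      rw [hsum1]
      have hg1pos := hgpos 1 le_rfl
      have hA : (Atil.card : ℝ) * g 1 ≤ (m:ℝ) * (β 0 * g 1) := by
        rw [hβ0, one_mul]
        exact mul_le_mul_of_nonneg_right (by exact_mod_cast hAcard) hg1pos.le
      have hterm : ∑ i ∈ Finset.Ico 1 J,
            ((Atil.filter (fun a => i < ia a)).card : ℝ) * (g (i+1) - g i)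
          < ∑ i ∈ Finset.Ico 1 J, (m:ℝ) * (β i * (g (i+1) - g i)) := by
        apply Finset.sum_lt_sum
        · intro i hi
          rw [Finset.mem_Ico] at hi
          have hδ : 0 ≤ g (i+1) - g i := sub_nonneg.2 (hgstep i hi.1)
          refine le_trans (mul_le_mul_of_nonneg_right (hnle i hi.1).le hδ) (le_of_eq (by ring))
        · refine ⟨1, Finset.mem_Ico.2 ⟨le_rfl, by omega⟩, ?_⟩
          have hδ1 : 0 < g 2 - g 1 := by
            have hsqrt : Real.sqrt (α 2) < Real.sqrt (α 1) :=
              Real.sqrt_lt_sqrt (hαpos 2 (by norm_num)).le (lt_trans hα2 hα1')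
            have : g 1 < g 2 := by
              rw [hg]
              exact inv_strictAnti₀ (Real.sqrt_pos.2 (hαpos 2 (by norm_num))) hsqrt
            linarith
          refine lt_of_lt_of_le (mul_lt_mul_of_pos_right (hnle 1 le_rfl) hδ1) (le_of_eq (by ring))
      have hfinal := mul_le_mul_of_nonneg_left hβbound hmR.le
      rw [mul_add, Finset.mul_sum] at hfinal
      linarith
    -- per-arm bound and contradiction
    have hmin : ∀ a ∈ Atil,
        min (2 * Real.sqrt (2 * L / N a))
          (2 * Real.sqrt (2 * L / (N a + TS a)) + TS a * ω a / (N a + TS a))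
        ≤ Δ / (m:ℝ) * g (ia a) := by
      intro a ha
      have h1 := covering_per_elem m hm Δ L (α (ia a)) (N a) (TS a) (ω a) hΔ hL
        (hαpos _ (hia a ha).1.1) (hNpos a ha) (hTSnonneg a ha) (hωnonneg a ha)
        (by rw [← hW]; exact (hia a ha).1.2)
      refine le_trans h1 (le_of_eq ?_)
      rw [hg, div_mul_eq_div_div, div_eq_mul_inv]
    have hchain : Δ ≤ Δ / (m:ℝ) * ∑ a ∈ Atil, g (ia a) := by
      rw [Finset.mul_sum]
      exact le_trans hgap (Finset.sum_le_sum hmin)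
    have hlast : Δ / (m:ℝ) * ∑ a ∈ Atil, g (ia a) < Δ / (m:ℝ) * (m:ℝ) :=
      mul_lt_mul_of_pos_left hstrict (div_pos hΔ hmR)
    rw [div_mul_cancel₀ Δ hmR.ne'] at hlast
    exact lt_irrefl Δ (lt_of_le_of_lt hchain hlast)
  refine ⟨Nat.find hex, (Nat.find_spec hex).1, ?_, (Nat.find_spec hex).2⟩
  intro j hj hjlt
  by_contra hc
  push_neg at hc
  exact Nat.find_min hex hjlt ⟨hj, hc⟩
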